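/- Let M ∈ ℝ^{d×d} be a monotone matrix and q ∈ ℝ^d, and let F(z, τ) = (Mz + qτ, −zᵀMz/τ − zᵀq) for τ > 0. Suppose p = (p_z, 0) ∈ ℝ^d × ℝ and r = (r_z, r_τ) ∈ ℝ^d × ℝ satisfy the monotone-extension condition (F(u) − r)ᵀ(u − p) ≥ 0 for all u = (z, τ) with τ > 0. Then p_zᵀM p_z = 0, M p_z = r_z, and r_τ ≤ −p_zᵀq; that is, (p, r) is an element of the infeasibility-embedding operator I. -/

import Mathlib

open Matrix

/-- Any monotone-extension pair `(p, r)` of the feasibility-embedding operator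
`F` with `p = (p_z, 0)` must belong to the infeasibility-embedding operator `I`:
`p_zᵀ M p_z = 0`, `M p_z = r_z` and `r_τ ≤ -p_zᵀ q`. -/
theorem extension_pairs_lie_in_infeasibility_operator
    {d : ℕ} (M : Matrix (Fin d) (Fin d) ℝ) (q : Fin d → ℝ)
    (hM : (M + Mᵀ).PosSemidef)
    (pz rz : Fin d → ℝ) (rτ : ℝ)
    (hext : ∀ (z : Fin d → ℝ) (τ : ℝ), 0 < τ →
      ((M *ᵥ z + τ • q) - rz) ⬝ᵥ (z - pz) +
        ((-(z ⬝ᵥ (M *ᵥ z)) / τ - z ⬝ᵥ q) - rτ) * (τ - 0) ≥ 0) :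
    pz ⬝ᵥ (M *ᵥ pz) = 0 ∧ M *ᵥ pz = rz ∧ rτ ≤ -(pz ⬝ᵥ q) := by
  -- Key linear inequality obtained by expanding `hext` (quadratic terms cancel)
  have key : ∀ (z : Fin d → ℝ) (τ : ℝ), 0 < τ →
      z ⬝ᵥ (Mᵀ *ᵥ pz + rz) ≤ rz ⬝ᵥ pz - τ * (q ⬝ᵥ pz + rτ) := by
    intro z τ hτ
    have h := hext z τ hτ
    have htr : (M *ᵥ z) ⬝ᵥ pz = z ⬝ᵥ (Mᵀ *ᵥ pz) := by
      rw [mulVec_transpose, dotProduct_comm (M *ᵥ z) pz, dotProduct_mulVec, dotProduct_comm]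
    have hcomm : (M *ᵥ z) ⬝ᵥ z = z ⬝ᵥ (M *ᵥ z) := dotProduct_comm _ _
    have hexp1 : ((M *ᵥ z + τ • q) - rz) ⬝ᵥ (z - pz) =
        z ⬝ᵥ (M *ᵥ z) - z ⬝ᵥ (Mᵀ *ᵥ pz) + τ * (q ⬝ᵥ z) - τ * (q ⬝ᵥ pz)
          - rz ⬝ᵥ z + rz ⬝ᵥ pz := by
      simp only [sub_dotProduct, add_dotProduct, dotProduct_sub, smul_dotProduct,
        smul_eq_mul, htr, hcomm]
      ring
    have hexp2 : ((-(z ⬝ᵥ (M *ᵥ z)) / τ - z ⬝ᵥ q) - rτ) * (τ - 0) =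
        -(z ⬝ᵥ (M *ᵥ z)) - τ * (z ⬝ᵥ q) - τ * rτ := by
      field_simp
      ring
    rw [hexp1, hexp2] at h
    have hzq : z ⬝ᵥ q = q ⬝ᵥ z := dotProduct_comm _ _
    have hzA : z ⬝ᵥ (Mᵀ *ᵥ pz + rz) = z ⬝ᵥ (Mᵀ *ᵥ pz) + rz ⬝ᵥ z := by
      rw [dotProduct_add, dotProduct_comm z rz]
    rw [hzA]
    nlinarith [h]
  -- The coefficient of `z` must vanish
  set A : Fin d → ℝ := Mᵀ *ᵥ pz + rz with hAdef
  have hC : ∀ τ : ℝ, 0 < τ → ∀ t : ℝ, t * (A ⬝ᵥ A) ≤ rz ⬝ᵥ pz - τ * (q ⬝ᵥ pz + rτ) := by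
    intro τ hτ t
    have := key (t • A) τ hτ
    rwa [smul_dotProduct, smul_eq_mul] at this
  have hAA : A ⬝ᵥ A = 0 := by
    by_contra hne
    have h1 := hC 1 one_pos (((rz ⬝ᵥ pz - 1 * (q ⬝ᵥ pz + rτ)) + 1) / (A ⬝ᵥ A))
    rw [div_mul_cancel₀ _ hne] at h1
    linarith
  have hA0 : A = 0 := by
    rwa [dotProduct_self_eq_zero] at hAA
  -- consequences: `τ * b ≤ c` for all `τ > 0`, with `b = q⬝pz + rτ`, `c = rz⬝pz`
  have hlin : ∀ τ : ℝ, 0 < τ → τ * (q ⬝ᵥ pz + rτ) ≤ rz ⬝ᵥ pz := by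
    intro τ hτ
    have := key 0 τ hτ
    simp only [zero_dotProduct] at this
    linarith
  have hb : q ⬝ᵥ pz + rτ ≤ 0 := by
    by_contra hb
    push_neg at hb
    have hτpos : 0 < (|rz ⬝ᵥ pz| + 1) / (q ⬝ᵥ pz + rτ) := by positivity
    have := hlin _ hτpos
    rw [div_mul_cancel₀ _ (ne_of_gt hb)] at this
    have := abs_nonneg (rz ⬝ᵥ pz)
    have := le_abs_self (rz ⬝ᵥ pz)
    linarith
  have hc : 0 ≤ rz ⬝ᵥ pz := by
    by_contra hc
    push_neg at hc
    set b := q ⬝ᵥ pz + rτ with hbdef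
    set c := rz ⬝ᵥ pz with hcdef
    have hbneg : b < 0 := by
      rcases lt_or_eq_of_le hb with h | h
      · exact h
      · exfalso; have h1 := hlin 1 one_pos; linarith
    have hτpos : 0 < c / (2 * b) := div_pos_of_neg_of_neg hc (by linarith)
    have := hlin _ hτpos
    have hb2 : (2 : ℝ) * b ≠ 0 := by linarith
    rw [div_mul_eq_mul_div, mul_comm] at this
    -- this : b * c / (2 * b) ≤ c
    have heq : b * c / (2 * b) = c / 2 := by
      rw [mul_comm b c, mul_div_mul_right _ _ hbneg.ne]
    rw [heq] at this
    linarith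
  -- rz = -(Mᵀ *ᵥ pz)
  have hrz : Mᵀ *ᵥ pz = -rz := by
    have : Mᵀ *ᵥ pz + rz = 0 := hA0
    linear_combination (norm := module) this
  -- pzᵀ M pz = pzᵀ Mᵀ pz
  have hsym : pz ⬝ᵥ (Mᵀ *ᵥ pz) = pz ⬝ᵥ (M *ᵥ pz) := by
    rw [mulVec_transpose, dotProduct_comm pz, dotProduct_mulVec]
  have hMT : pz ⬝ᵥ (Mᵀ *ᵥ pz) = -(rz ⬝ᵥ pz) := by
    rw [hrz, dotProduct_neg, dotProduct_comm]
  have hle : pz ⬝ᵥ (M *ᵥ pz) ≤ 0 := by rw [← hsym, hMT]; linarith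
  have hpsd := hM.dotProduct_mulVec_nonneg pz
  have hstar : star pz = pz := rfl
  rw [hstar] at hpsd
  have hexp : pz ⬝ᵥ ((M + Mᵀ) *ᵥ pz) = 2 * (pz ⬝ᵥ (M *ᵥ pz)) := by
    rw [add_mulVec, dotProduct_add, hsym]; ring
  have hzero : pz ⬝ᵥ (M *ᵥ pz) = 0 := by
    have : (0 : ℝ) ≤ pz ⬝ᵥ ((M + Mᵀ) *ᵥ pz) := by exact_mod_cast hpsd
    rw [hexp] at this
    linarith
  refine ⟨hzero, ?_, ?_⟩
  · -- M pz = rz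
    have hker : (M + Mᵀ) *ᵥ pz = 0 := by
      rw [← (hM.dotProduct_mulVec_zero_iff pz), hstar, hexp, hzero]
      ring
    rw [add_mulVec, hrz] at hker
    linear_combination (norm := module) hker
  · rw [dotProduct_comm] at hb
    linarith
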